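/- Let S ⊆ ℕ^d be a Frobenius generalized numerical semigroup with Frobenius gap F = F(S), and let T(S) = {x ∈ ℕ^d | F − x ∈ (ℤ^d \ S) ∪ {0}} (difference taken in ℤ^d). Then {x ∈ ℕ^d | x + T(S) ⊆ T(S)} = S ∪ PF(S). -/

import Mathlib

open Finset

/-- A generalized numerical semigroup (GNS) in `ℕ^d`: contains `0`, is closed under
componentwise addition, and has finite complement. -/
def IsGNS {d : ℕ} (S : Set (Fin d → ℕ)) : Prop :=
  (0 : Fin d → ℕ) ∈ S ∧ (∀ a ∈ S, ∀ b ∈ S, a + b ∈ S) ∧ Sᶜ.Finite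

/-- A relaxed monomial order on `ℕ^d`: a (strict) total order `r` such that
`r v w → r v (w + u)` and `0` is below every nonzero element. -/
def IsRMO {d : ℕ} (r : (Fin d → ℕ) → (Fin d → ℕ) → Prop) : Prop :=
  IsStrictTotalOrder (Fin d → ℕ) r ∧
  (∀ v w u : Fin d → ℕ, r v w → r v (w + u)) ∧
  (∀ v : Fin d → ℕ, v ≠ 0 → r 0 v)

/-- `F` is the Frobenius gap of `S` with respect to the order `r`, i.e. the
`r`-maximum of the gap set `ℕ^d \ S`. -/
def IsFrobGapWrt {d : ℕ} (S : Set (Fin d → ℕ))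
    (r : (Fin d → ℕ) → (Fin d → ℕ) → Prop) (F : Fin d → ℕ) : Prop :=
  F ∉ S ∧ ∀ x, x ∉ S → x ≠ F → r x F

/-- `F` is a Frobenius allowable gap of `S`: it is the Frobenius gap with respect to
some relaxed monomial order. -/
def FrobAllowable {d : ℕ} (S : Set (Fin d → ℕ)) (F : Fin d → ℕ) : Prop :=
  ∃ r, IsRMO r ∧ IsFrobGapWrt S r F

/-- `F` is a maximal gap of `S` with respect to the natural (componentwise)
partial order on `ℕ^d`. -/
def MaxGap {d : ℕ} (S : Set (Fin d → ℕ)) (F : Fin d → ℕ) : Prop :=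
  F ∉ S ∧ ∀ x, x ∉ S → F ≤ x → x = F

/-- The set of Frobenius allowable gaps of `S`, i.e. the maximal elements of the gap
set under the natural partial order. -/
def FA {d : ℕ} (S : Set (Fin d → ℕ)) : Set (Fin d → ℕ) := {F | MaxGap S F}

/-- The set of pseudo-Frobenius gaps of `S`. -/
def PF {d : ℕ} (S : Set (Fin d → ℕ)) : Set (Fin d → ℕ) :=
  {P | P ∉ S ∧ ∀ s ∈ S, s ≠ 0 → P + s ∈ S}

/-- `S` is quasi-irreducible: for every gap `x`, either `2x` is Frobenius allowable or
`F - x ∈ S` for some Frobenius allowable gap `F`. -/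
def QuasiIrreducible {d : ℕ} (S : Set (Fin d → ℕ)) : Prop :=
  ∀ x, x ∉ S → (x + x ∈ FA S ∨ ∃ F ∈ FA S, ∃ s ∈ S, x + s = F)

/-- `S` is a Frobenius GNS with Frobenius gap `F`: the gap set has `F` as its unique
maximal element under the natural partial order. -/
def IsFrobeniusGNS {d : ℕ} (S : Set (Fin d → ℕ)) (F : Fin d → ℕ) : Prop :=
  IsGNS S ∧ MaxGap S F ∧ ∀ x, MaxGap S x → x = F

/-- `‖F‖ = ∏ i (F^(i) + 1)`, the number of lattice points in the box `[0, F]`. -/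
def normF {d : ℕ} (F : Fin d → ℕ) : ℕ := ∏ i, (F i + 1)

/-- `N(F)`: the number of Frobenius GNS in `ℕ^d` with Frobenius gap `F`. -/
noncomputable def NF {d : ℕ} (F : Fin d → ℕ) : ℕ :=
  {S : Set (Fin d → ℕ) | IsFrobeniusGNS S F}.ncard

/-- The set `T(S) = {x ∈ ℕ^d ∣ F - x ∈ (ℤ^d \ S) ∪ {0}}`, where the difference is
taken in `ℤ^d` and `S` is regarded as a subset of `ℤ^d`. -/
def TSet {d : ℕ} (S : Set (Fin d → ℕ)) (F : Fin d → ℕ) : Set (Fin d → ℕ) :=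
  {x | (fun i => (F i : ℤ) - (x i : ℤ)) ∈
      ((fun (s : Fin d → ℕ) => (fun i => (s i : ℤ))) '' S)ᶜ ∪ {0}}


lemma mem_TSet_iff {d : ℕ} (S : Set (Fin d → ℕ)) (F x : Fin d → ℕ) :
    x ∈ TSet S F ↔
      (¬ ∃ u ∈ S, ∀ i, (u i : ℤ) = (F i : ℤ) - (x i : ℤ)) ∨ (∀ i, F i = x i) := by
  simp only [TSet, Set.mem_setOf_eq, Set.mem_union, Set.mem_compl_iff, Set.mem_image,
    Set.mem_singleton_iff, funext_iff, Pi.zero_apply]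
  constructor
  · rintro (hc | h0)
    · left; rintro ⟨u, hu, hequ⟩; exact hc ⟨u, hu, fun i => hequ i⟩
    · right; intro i; have := h0 i; omega
  · rintro (hc | h0)
    · left; rintro ⟨u, hu, hequ⟩; exact hc ⟨u, hu, fun i => hequ i⟩
    · right; intro i; have := h0 i; omega

/-- For a Frobenius GNS `S` with Frobenius gap `F`,
`{x ∈ ℕ^d ∣ x + T(S) ⊆ T(S)} = S ∪ PF(S)`. -/
theorem add_TSet_subset_eq {d : ℕ} (S : Set (Fin d → ℕ)) (F : Fin d → ℕ)
    (h : IsFrobeniusGNS S F) :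
    {x : Fin d → ℕ | ∀ t ∈ TSet S F, x + t ∈ TSet S F} = S ∪ PF S := by
  obtain ⟨⟨h0, hadd, hfin⟩, hmaxF, huniq⟩ := h
  have gap_le : ∀ x, x ∉ S → x ≤ F := by
    intro x hx
    have hA : {y : Fin d → ℕ | y ∉ S ∧ x ≤ y}.Finite :=
      hfin.subset (fun y hy => hy.1)
    obtain ⟨a, ⟨haS, hxa⟩, hamax⟩ :=
      (show ∃ a ∈ {y : Fin d → ℕ | y ∉ S ∧ x ≤ y}, ∀ z ∈ {y : Fin d → ℕ | y ∉ S ∧ x ≤ y}, a ≤ z → a = z from by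
        obtain ⟨a, ha, hm⟩ := hA.exists_maximal ⟨x, hx, le_refl x⟩
        exact ⟨a, ha, fun z hz hle => le_antisymm hle (hm hz hle)⟩)
    have haF : a = F :=
      huniq a ⟨haS, fun z hz hle => (hamax z ⟨hz, hxa.trans hle⟩ hle).symm⟩
    exact haF ▸ hxa
  ext x
  simp only [Set.mem_setOf_eq, Set.mem_union]
  constructor
  · intro hx
    by_cases hxS : x ∈ S
    · exact Or.inl hxS
    refine Or.inr ⟨hxS, fun s hs hsne => ?_⟩
    by_contra hxs
    have hle : x + s ≤ F := gap_le _ hxs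
    set t : Fin d → ℕ := fun i => F i - (x i + s i) with ht
    have htT : t ∈ TSet S F := by
      rw [mem_TSet_iff]
      left
      rintro ⟨u, hu, hequ⟩
      have huxs : u = x + s := by
        funext i
        have h1 := hle i
        have h2 := hequ i
        simp only [Pi.add_apply] at h1 ⊢
        simp only [ht] at h2
        omega
      exact hxs (huxs ▸ hu)
    have hmem := hx t htT
    rw [mem_TSet_iff] at hmem
    rcases hmem with hc | h0'
    · apply hc
      refine ⟨s, hs, fun i => ?_⟩
      have h1 := hle i
      simp only [Pi.add_apply] at h1 ⊢
      simp only [ht]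
      omega
    · apply hsne
      funext i
      have h1 := hle i
      have h2 := h0' i
      simp only [Pi.add_apply, Pi.zero_apply] at h1 h2 ⊢
      simp only [ht] at h2
      omega
  · intro hx t htT
    rw [mem_TSet_iff] at htT ⊢
    by_cases hex : ∃ u ∈ S, ∀ i, (u i : ℤ) = (F i : ℤ) - ((x + t) i : ℤ)
    · obtain ⟨u, hu, hequ⟩ := hex
      rcases hx with hxS | ⟨hxP, hxPF⟩
      · have hut : ∀ i, (((u + x) i : ℕ) : ℤ) = (F i : ℤ) - (t i : ℤ) := by
          intro i
          have := hequ i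
          simp only [Pi.add_apply] at this ⊢
          push_cast
          omega
        rcases htT with hc | h0'
        · exact absurd ⟨u + x, hadd u hu x hxS, hut⟩ hc
        · right
          intro i
          have h1 := hequ i
          have h2 := h0' i
          have h3 := hut i
          simp only [Pi.add_apply] at h1 h3 ⊢
          omega
      · by_cases hu0 : u = 0
        · right
          intro i
          have := hequ i
          simp only [hu0, Pi.zero_apply, Pi.add_apply] at this ⊢
          omega
        · have hxu : x + u ∈ S := hxPF u hu hu0
          have hut : ∀ i, (((x + u) i : ℕ) : ℤ) = (F i : ℤ) - (t i : ℤ) := by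
            intro i
            have := hequ i
            simp only [Pi.add_apply] at this ⊢
            push_cast
            omega
          rcases htT with hc | h0'
          · exact absurd ⟨x + u, hxu, hut⟩ hc
          · exfalso
            apply hu0
            funext i
            have h1 := hut i
            have h2 := h0' i
            simp only [Pi.add_apply, Pi.zero_apply] at h1 ⊢
            omega
    · left
      exact hex
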